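/- arXiv:1904.08219 — 2 statements merged into one kernel-verified Lean document; each statement's English description precedes it below -/
import Mathlib

section
/- For positive integers n, k with k ≥ 2 and any positive integer vector s = (s_1,...,s_k), the chromatic number of the s-stable Kneser graph KG(n,k)_{s-stab} is at most n - (s_1 + ... + s_{k-1}), provided n ≥ s_1 + ... + s_{k-1} + 1 and the graph has at least one vertex. -/
/-- The `j`-th smallest element (0-indexed) of a finite set of naturals (default `0`). -/
def sortedNth (A : Finset ℕ) (j : ℕ) : ℕ := (A.sort (· ≤ ·)).getD j 0

/-- `A` is an `s`-stable `k`-subset of `[n] = {1,…,n}`: writing `A(0) < A(1) < ⋯ < A(k-1)`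
for its elements, `A(j+1) - A(j) ≥ s j` for `j + 1 < k`, and `A(k-1) - A(0) ≤ n - s (k-1)`
(formulated additively to avoid truncated subtraction). -/
def VecStable (n k : ℕ) (s : ℕ → ℕ) (A : Finset ℕ) : Prop :=
  A ⊆ Finset.Icc 1 n ∧ A.card = k ∧
    (∀ j, j + 1 < k → sortedNth A j + s j ≤ sortedNth A (j + 1)) ∧
    sortedNth A (k - 1) + s (k - 1) ≤ sortedNth A 0 + n

/-- The `s`-stable Kneser graph `KG(n,k)_{s-stab}`: vertices are the `s`-stable
`k`-subsets of `[n]`, adjacent iff disjoint. -/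
def stableKneser (n k : ℕ) (s : ℕ → ℕ) :
    SimpleGraph {A : Finset ℕ // VecStable n k s A} where
  Adj X Y := X ≠ Y ∧ Disjoint X.1 Y.1
  symm := ⟨fun _ _ h => ⟨h.1.symm, h.2.symm⟩⟩
  loopless := ⟨fun _ h => h.1 rfl⟩

/-- The set `U = {1, s₁+1, s₁+s₂+1, …}` (the `j`-th element is `s₁+⋯+s_j + 1`). -/
def Uset (k : ℕ) (s : ℕ → ℕ) : Finset ℕ :=
  (Finset.range k).image (fun j => (∑ i ∈ Finset.range j, s i) + 1)

/-- The set `V = {2, s₁+2, s₁+s₂+2, …}`. -/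
def Vset (k : ℕ) (s : ℕ → ℕ) : Finset ℕ :=
  (Finset.range k).image (fun j => (∑ i ∈ Finset.range j, s i) + 2)

lemma sortedNth_mem (A : Finset ℕ) (j : ℕ) (h : j < A.card) : sortedNth A j ∈ A := by
  have hl : (A.sort (· ≤ ·)).length = A.card := A.length_sort _
  have : sortedNth A j = (A.sort (· ≤ ·)).get ⟨j, by omega⟩ :=
    List.getD_eq_getElem _ _ (by omega)
  rw [this, ← Finset.mem_sort (· ≤ ·)]
  exact List.get_mem _ _

lemma sortedNth_chain {n k : ℕ} {s : ℕ → ℕ} {A : Finset ℕ} (hA : VecStable n k s A)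
    (j : ℕ) (hj : j < k) :
    sortedNth A 0 + ∑ i ∈ Finset.range j, s i ≤ sortedNth A j := by
  induction j with
  | zero => simp
  | succ m ih =>
      have h1 := ih (by omega)
      have h2 := hA.2.2.1 m (by omega)
      rw [Finset.sum_range_succ]
      omega

/-- `χ(KG(n,k)_{s-stab}) ≤ n - (s₁+⋯+s_{k-1})` for a positive vector `s`,
provided `n ≥ s₁+⋯+s_{k-1} + 1` and the graph has at least one vertex. -/
theorem stmt1 (n k : ℕ) (s : ℕ → ℕ) (hk : 2 ≤ k)
    (hs : ∀ i, i < k → 1 ≤ s i)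
    (hn : (∑ i ∈ Finset.range (k - 1), s i) + 1 ≤ n)
    (hne : Nonempty {A : Finset ℕ // VecStable n k s A}) :
    (stableKneser n k s).chromaticNumber ≤
      ((n - ∑ i ∈ Finset.range (k - 1), s i : ℕ) : ℕ∞) := by
  set σ := ∑ i ∈ Finset.range (k - 1), s i with hσ
  -- key facts about a stable set
  have key : ∀ A : {A : Finset ℕ // VecStable n k s A},
      sortedNth A.1 0 ∈ A.1 ∧ 1 ≤ sortedNth A.1 0 ∧ sortedNth A.1 0 + σ ≤ n := by
    intro ⟨A, hA⟩
    dsimp only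
    have hcard : A.card = k := hA.2.1
    have h0 : sortedNth A 0 ∈ A := sortedNth_mem A 0 (by omega)
    have hlast : sortedNth A (k - 1) ∈ A := sortedNth_mem A (k - 1) (by omega)
    have hlastn : sortedNth A (k - 1) ≤ n := (Finset.mem_Icc.mp (hA.1 hlast)).2
    have h1 : 1 ≤ sortedNth A 0 := (Finset.mem_Icc.mp (hA.1 h0)).1
    have hchain := sortedNth_chain hA (k - 1) (by omega)
    exact ⟨h0, h1, by omega⟩
  apply SimpleGraph.Colorable.chromaticNumber_le
  refine ⟨⟨fun A => ⟨sortedNth A.1 0 - 1, ?_⟩, ?_⟩⟩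
  · obtain ⟨_, h1, h2⟩ := key A
    omega
  · rintro X Y ⟨hne', hdisj⟩ heq
    obtain ⟨hmX, h1X, -⟩ := key X
    obtain ⟨hmY, h1Y, -⟩ := key Y
    have : sortedNth X.1 0 = sortedNth Y.1 0 := by
      have := Fin.mk.injEq .. ▸ heq
      simp only [Fin.mk.injEq] at heq
      omega
    exact Finset.disjoint_left.mp hdisj hmX (this ▸ hmY)
end

section
/- Let s⃗ = (s_1,...,s_{k-1},1) with s_i ≥ 2 and n = s_1+...+s_{k-1}+2, and let P(n,k,s⃗) be the poset of pairs (A,B) of disjoint subsets of [n] each containing an s⃗-stable k-subset. Then P(n,k,s⃗) is the disjoint union of P_1 = {(A,B) : V ⊆ A, U ⊆ B} and P_2 = {(A,B) : U ⊆ A, V ⊆ B}, where U = {1, s_1+1, ..., Σ_{i<k}s_i + 1} and V = {2, s_1+2, ..., Σ_{i<k}s_i + 2}; moreover (V,U) is the minimum element of P_1 and (U,V) is the minimum element of P_2. -/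
/-- Membership in the poset `P(n,k,s⃗)`: pairs `(A,B)` of disjoint subsets of `[n]`,
each containing an `s⃗`-stable `k`-subset. -/
def Ppred (n k : ℕ) (s : ℕ → ℕ) (A B : Finset ℕ) : Prop :=
  A ⊆ Finset.Icc 1 n ∧ B ⊆ Finset.Icc 1 n ∧ Disjoint A B ∧
    (∃ C ⊆ A, VecStable n k s C) ∧ (∃ C ⊆ B, VecStable n k s C)

/- ### Auxiliary lemmas -/

lemma sortedNth_mem_s11 {C : Finset ℕ} {j : ℕ} (hj : j < C.card) : sortedNth C j ∈ C := by
  have hl : j < (C.sort (· ≤ ·)).length := by rwa [Finset.length_sort]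
  rw [sortedNth, List.getD_eq_getElem _ _ hl]
  exact (Finset.mem_sort _).1 (List.getElem_mem _)

lemma finset_ext_sortedNth {C D : Finset ℕ} (h : C.card = D.card)
    (he : ∀ j < C.card, sortedNth C j = sortedNth D j) : C = D := by
  have hs : C.sort (· ≤ ·) = D.sort (· ≤ ·) := by
    apply List.ext_getElem (by simp [Finset.length_sort, h])
    intro i h1 h2
    have h3 := he i (by rwa [Finset.length_sort] at h1)
    rwa [sortedNth, sortedNth, List.getD_eq_getElem _ _ h1,
      List.getD_eq_getElem _ _ h2] at h3
  calc C = (C.sort (· ≤ ·)).toFinset := (Finset.sort_toFinset _ _).symm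
    _ = (D.sort (· ≤ ·)).toFinset := by rw [hs]
    _ = D := Finset.sort_toFinset _ _

lemma sort_image (k : ℕ) (f : ℕ → ℕ) (hf : ∀ i j, i < j → j < k → f i < f j) :
    ((Finset.range k).image f).sort (· ≤ ·) = (List.range k).map f := by
  have hinj : ∀ x ∈ List.range k, ∀ y ∈ List.range k, f x = f y → x = y := by
    intro x hx y hy hxy
    simp only [List.mem_range] at hx hy
    rcases lt_trichotomy x y with h | h | h
    · exact absurd hxy (hf x y h hy).ne
    · exact h
    · exact absurd hxy.symm (hf y x h hx).ne
  apply List.Perm.eq_of_pairwise' (Finset.pairwise_sort _ _) ?_ ?_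
  · apply List.Pairwise.map f (fun a b h => h)
    apply ((List.pairwise_lt_range (n := k)).imp_of_mem)
    intro a b ha hb hab
    exact (hf a b hab (List.mem_range.1 hb)).le
  · apply List.perm_of_nodup_nodup_toFinset_eq (Finset.sort_nodup _ _)
    · exact (List.nodup_range (n := k)).map_on hinj
    · rw [Finset.sort_toFinset]
      ext x
      simp [List.mem_toFinset, List.mem_map, List.mem_range, Finset.mem_image,
        Finset.mem_range, eq_comm]

lemma sortedNth_image {k : ℕ} (f : ℕ → ℕ) (hf : ∀ i j, i < j → j < k → f i < f j)
    {j : ℕ} (hj : j < k) : sortedNth ((Finset.range k).image f) j = f j := by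
  rw [sortedNth, sort_image k f hf]
  rw [List.getD_eq_getElem _ _ (by simpa using hj)]
  simp

lemma card_image_of_strictMono {k : ℕ} (f : ℕ → ℕ)
    (hf : ∀ i j, i < j → j < k → f i < f j) :
    ((Finset.range k).image f).card = k := by
  rw [Finset.card_image_of_injOn, Finset.card_range]
  intro x hx y hy hxy
  simp only [Finset.coe_range, Set.mem_Iio] at hx hy
  rcases lt_trichotomy x y with h | h | h
  · exact absurd hxy (hf x y h hy).ne
  · exact h
  · exact absurd hxy.symm (hf y x h hx).ne

section main

variable {n k : ℕ} {s : ℕ → ℕ}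

/-- partial sums jump by at least 2 -/
lemma psum_lt (hs : ∀ i, i + 1 < k → 2 ≤ s i) {i j : ℕ} (hij : i < j) (hj : j < k) :
    (∑ x ∈ Finset.range i, s x) + 2 ≤ ∑ x ∈ Finset.range j, s x := by
  have h1 : (∑ x ∈ Finset.range i, s x) + s i = ∑ x ∈ Finset.range (i + 1), s x :=
    (Finset.sum_range_succ s i).symm
  have h2 : (∑ x ∈ Finset.range (i + 1), s x) ≤ ∑ x ∈ Finset.range j, s x :=
    Finset.sum_le_sum_of_subset (Finset.range_subset_range.2 hij)
  have h3 : 2 ≤ s i := hs i (by omega)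
  omega

lemma psum_mono {i j : ℕ} (hij : i ≤ j) :
    (∑ x ∈ Finset.range i, s x) ≤ ∑ x ∈ Finset.range j, s x :=
  Finset.sum_le_sum_of_subset (Finset.range_subset_range.2 hij)

lemma hfU (hs : ∀ i, i + 1 < k → 2 ≤ s i) :
    ∀ i j, i < j → j < k → (∑ x ∈ Finset.range i, s x) + 1 < (∑ x ∈ Finset.range j, s x) + 1 := by
  intro i j hij hj
  have := psum_lt hs hij hj
  omega

lemma hfV (hs : ∀ i, i + 1 < k → 2 ≤ s i) :
    ∀ i j, i < j → j < k → (∑ x ∈ Finset.range i, s x) + 2 < (∑ x ∈ Finset.range j, s x) + 2 := by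
  intro i j hij hj
  have := psum_lt hs hij hj
  omega

lemma sortedNth_Uset (hs : ∀ i, i + 1 < k → 2 ≤ s i) {j : ℕ} (hj : j < k) :
    sortedNth (Uset k s) j = (∑ i ∈ Finset.range j, s i) + 1 :=
  sortedNth_image _ (hfU hs) hj

lemma sortedNth_Vset (hs : ∀ i, i + 1 < k → 2 ≤ s i) {j : ℕ} (hj : j < k) :
    sortedNth (Vset k s) j = (∑ i ∈ Finset.range j, s i) + 2 :=
  sortedNth_image _ (hfV hs) hj

lemma card_Uset (hs : ∀ i, i + 1 < k → 2 ≤ s i) : (Uset k s).card = k :=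
  card_image_of_strictMono _ (hfU hs)

lemma card_Vset (hs : ∀ i, i + 1 < k → 2 ≤ s i) : (Vset k s).card = k :=
  card_image_of_strictMono _ (hfV hs)

lemma Uset_subset (hk : 1 ≤ k) (hn : n = (∑ i ∈ Finset.range (k - 1), s i) + 2) :
    Uset k s ⊆ Finset.Icc 1 n := by
  intro x hx
  simp only [Uset, Finset.mem_image, Finset.mem_range] at hx
  obtain ⟨j, hj, rfl⟩ := hx
  have := psum_mono (s := s) (show j ≤ k - 1 by omega)
  simp only [Finset.mem_Icc]
  omega

lemma Vset_subset (hk : 1 ≤ k) (hn : n = (∑ i ∈ Finset.range (k - 1), s i) + 2) :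
    Vset k s ⊆ Finset.Icc 1 n := by
  intro x hx
  simp only [Vset, Finset.mem_image, Finset.mem_range] at hx
  obtain ⟨j, hj, rfl⟩ := hx
  have := psum_mono (s := s) (show j ≤ k - 1 by omega)
  simp only [Finset.mem_Icc]
  omega

lemma disjoint_UV (hs : ∀ i, i + 1 < k → 2 ≤ s i) : Disjoint (Uset k s) (Vset k s) := by
  rw [Finset.disjoint_left]
  intro x hxU hxV
  simp only [Uset, Vset, Finset.mem_image, Finset.mem_range] at hxU hxV
  obtain ⟨j, hj, rfl⟩ := hxU
  obtain ⟨j', hj', he⟩ := hxV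
  rcases le_or_gt j j' with h | h
  · have := psum_mono (s := s) h
    omega
  · have := psum_lt hs h hj
    omega

lemma two_mem_Vset (hk : 1 ≤ k) : 2 ∈ Vset k s := by
  simp only [Vset, Finset.mem_image, Finset.mem_range]
  exact ⟨0, hk, by simp⟩

lemma one_mem_Uset (hk : 1 ≤ k) : 1 ∈ Uset k s := by
  simp only [Uset, Finset.mem_image, Finset.mem_range]
  exact ⟨0, hk, by simp⟩

lemma stable_Uset (hk : 1 ≤ k) (hs : ∀ i, i + 1 < k → 2 ≤ s i)
    (hn : n = (∑ i ∈ Finset.range (k - 1), s i) + 2) :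
    VecStable n k (fun j => if j = k - 1 then 1 else s j) (Uset k s) := by
  refine ⟨Uset_subset hk hn, card_Uset hs, ?_, ?_⟩
  · intro j hj
    have h' : ¬ (j = k - 1) := by omega
    simp only [if_neg h']
    rw [sortedNth_Uset hs (show j + 1 < k from hj),
      sortedNth_Uset hs (show j < k by omega), Finset.sum_range_succ]
    omega
  · simp only [eq_self_iff_true, if_true]
    rw [sortedNth_Uset hs (show k - 1 < k by omega), sortedNth_Uset hs (show 0 < k from hk)]
    simp only [Finset.range_zero, Finset.sum_empty]
    omega

lemma stable_Vset (hk : 1 ≤ k) (hs : ∀ i, i + 1 < k → 2 ≤ s i)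
    (hn : n = (∑ i ∈ Finset.range (k - 1), s i) + 2) :
    VecStable n k (fun j => if j = k - 1 then 1 else s j) (Vset k s) := by
  refine ⟨Vset_subset hk hn, card_Vset hs, ?_, ?_⟩
  · intro j hj
    have h' : ¬ (j = k - 1) := by omega
    simp only [if_neg h']
    rw [sortedNth_Vset hs (show j + 1 < k from hj),
      sortedNth_Vset hs (show j < k by omega), Finset.sum_range_succ]
    omega
  · simp only [eq_self_iff_true, if_true]
    rw [sortedNth_Vset hs (show k - 1 < k by omega), sortedNth_Vset hs (show 0 < k from hk)]
    simp only [Finset.range_zero, Finset.sum_empty]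
    omega

/-- structure of an arbitrary stable set -/
lemma stable_cases (hk : 1 ≤ k) (hs : ∀ i, i + 1 < k → 2 ≤ s i)
    (hn : n = (∑ i ∈ Finset.range (k - 1), s i) + 2)
    {C : Finset ℕ} (hC : VecStable n k (fun j => if j = k - 1 then 1 else s j) C) :
    (∀ j < k, sortedNth C j = (∑ i ∈ Finset.range j, s i) + 2) ∨
    (sortedNth C 0 = 1 ∧ ∀ j < k, sortedNth C j = (∑ i ∈ Finset.range j, s i) + 1 ∨
        sortedNth C j = (∑ i ∈ Finset.range j, s i) + 2) := by
  obtain ⟨hsub, hcard, hgap, hlast⟩ := hC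
  have hgap' : ∀ j, j + 1 < k → sortedNth C j + s j ≤ sortedNth C (j + 1) := by
    intro j hj
    have h' : ¬ (j = k - 1) := by omega
    simpa only [if_neg h'] using hgap j hj
  have hlast' : sortedNth C (k - 1) + 1 ≤ sortedNth C 0 + n := by
    simpa only [eq_self_iff_true, if_true] using hlast
  have hbd : ∀ j < k, 1 ≤ sortedNth C j ∧ sortedNth C j ≤ n := by
    intro j hj
    have hm : sortedNth C j ∈ C := sortedNth_mem_s11 (by omega)
    have := hsub hm
    simpa [Finset.mem_Icc] using this
  have chain : ∀ d j, j + d < k →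
      sortedNth C j + ∑ i ∈ Finset.Ico j (j + d), s i ≤ sortedNth C (j + d) := by
    intro d
    induction d with
    | zero => intro j _; simp
    | succ d ih =>
      intro j hj
      have h1 := ih j (by omega)
      have h2 := hgap' (j + d) (by omega)
      rw [show j + (d + 1) = (j + d) + 1 by omega,
        Finset.sum_Ico_succ_top (by omega)]
      omega
  have low : ∀ j < k, sortedNth C 0 + ∑ i ∈ Finset.range j, s i ≤ sortedNth C j := by
    intro j hj
    have h := chain j 0 (by omega)
    simp only [zero_add] at h
    rwa [Finset.range_eq_Ico]
  have high : ∀ j < k,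
      sortedNth C j + ∑ i ∈ Finset.Ico j (k - 1), s i ≤ sortedNth C (k - 1) := by
    intro j hj
    have h := chain (k - 1 - j) j (by omega)
    rwa [show j + (k - 1 - j) = k - 1 by omega] at h
  have hsplit : ∀ j < k, (∑ i ∈ Finset.range j, s i) + ∑ i ∈ Finset.Ico j (k - 1), s i
      = ∑ i ∈ Finset.range (k - 1), s i := by
    intro j hj
    rw [Finset.range_eq_Ico, Finset.range_eq_Ico]
    exact Finset.sum_Ico_consecutive s (by omega) (by omega)
  have hbd0 := hbd 0 hk
  have hbdk := hbd (k - 1) (by omega)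
  have hc0 : sortedNth C 0 ≤ 2 := by
    have h1 := high 0 hk
    have h2 := hsplit 0 hk
    simp only [Finset.range_zero, Finset.sum_empty, zero_add] at h2
    omega
  rcases (show sortedNth C 0 = 1 ∨ sortedNth C 0 = 2 by omega) with h0 | h0
  · right
    refine ⟨h0, fun j hj => ?_⟩
    have h1 := low j hj
    have h2 := high j hj
    have h3 := hsplit j hj
    omega
  · left
    intro j hj
    have h1 := low j hj
    have h2 := high j hj
    have h3 := hsplit j hj
    omega

/-- two disjoint stable sets must be `U` and `V` in some order -/
lemma pair_lemma (hk : 1 ≤ k) (hs : ∀ i, i + 1 < k → 2 ≤ s i)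
    (hn : n = (∑ i ∈ Finset.range (k - 1), s i) + 2)
    {C D : Finset ℕ} (hC : VecStable n k (fun j => if j = k - 1 then 1 else s j) C)
    (hD : VecStable n k (fun j => if j = k - 1 then 1 else s j) D)
    (hdisj : Disjoint C D) :
    (C = Uset k s ∧ D = Vset k s) ∨ (C = Vset k s ∧ D = Uset k s) := by
  have hCcard : C.card = k := hC.2.1
  have hDcard : D.card = k := hD.2.1
  have eqV : ∀ E : Finset ℕ, E.card = k →
      (∀ j < k, sortedNth E j = (∑ i ∈ Finset.range j, s i) + 2) → E = Vset k s := by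
    intro E hcard he
    apply finset_ext_sortedNth (by rw [hcard, card_Vset hs])
    intro j hj
    rw [hcard] at hj
    rw [he j hj, sortedNth_Vset hs hj]
  have eqU : ∀ E : Finset ℕ, E.card = k →
      (∀ j < k, sortedNth E j = (∑ i ∈ Finset.range j, s i) + 1) → E = Uset k s := by
    intro E hcard he
    apply finset_ext_sortedNth (by rw [hcard, card_Uset hs])
    intro j hj
    rw [hcard] at hj
    rw [he j hj, sortedNth_Uset hs hj]
  -- an element of form P j + 2 lies in Vset
  have memV : ∀ j < k, (∑ i ∈ Finset.range j, s i) + 2 ∈ Vset k s := by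
    intro j hj
    simp only [Vset, Finset.mem_image, Finset.mem_range]
    exact ⟨j, hj, rfl⟩
  have forceU : ∀ E : Finset ℕ,
      VecStable n k (fun j => if j = k - 1 then 1 else s j) E →
      Disjoint E (Vset k s) →
      (sortedNth E 0 = 1 ∧ ∀ j < k, sortedNth E j = (∑ i ∈ Finset.range j, s i) + 1 ∨
        sortedNth E j = (∑ i ∈ Finset.range j, s i) + 2) → E = Uset k s := by
    intro E hE hEV hcase
    have hEcard : E.card = k := hE.2.1
    apply eqU E hEcard
    intro j hj
    rcases hcase.2 j hj with h | h
    · exact h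
    · exfalso
      have hm : sortedNth E j ∈ E := sortedNth_mem_s11 (by omega)
      have hv : sortedNth E j ∈ Vset k s := h ▸ memV j hj
      exact Finset.disjoint_left.1 hEV hm hv
  rcases stable_cases hk hs hn hC with hC1 | hC1 <;>
    rcases stable_cases hk hs hn hD with hD1 | hD1
  · exfalso
    have h1 : sortedNth C 0 ∈ C := sortedNth_mem_s11 (by omega)
    have h2 : sortedNth D 0 ∈ D := sortedNth_mem_s11 (by omega)
    have e1 := hC1 0 hk
    have e2 := hD1 0 hk
    rw [e1] at h1
    rw [e2] at h2
    exact Finset.disjoint_left.1 hdisj h1 h2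
  · right
    have hCV : C = Vset k s := eqV C hCcard hC1
    refine ⟨hCV, forceU D hD ?_ hD1⟩
    rw [← hCV]
    exact hdisj.symm
  · left
    have hDV : D = Vset k s := eqV D hDcard hD1
    refine ⟨forceU C hC ?_ hC1, hDV⟩
    rw [← hDV]
    exact hdisj
  · exfalso
    have h1 : sortedNth C 0 ∈ C := sortedNth_mem_s11 (by omega)
    have h2 : sortedNth D 0 ∈ D := sortedNth_mem_s11 (by omega)
    rw [hC1.1] at h1
    rw [hD1.1] at h2
    exact Finset.disjoint_left.1 hdisj h1 h2

end main

/-- for `s⃗ = (s₁,…,s_{k-1},1)` with `sᵢ ≥ 2` and `n = s₁+⋯+s_{k-1}+2`,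
the poset `P(n,k,s⃗)` is the disjoint union of `P₁ = {(A,B) : V ⊆ A, U ⊆ B}` and
`P₂ = {(A,B) : U ⊆ A, V ⊆ B}`; moreover `(V,U)` is the minimum of `P₁` and `(U,V)`
the minimum of `P₂`. -/
theorem stmt11 (n k : ℕ) (s : ℕ → ℕ) (hk : 1 ≤ k)
    (hs : ∀ i, i + 1 < k → 2 ≤ s i)
    (hn : n = (∑ i ∈ Finset.range (k - 1), s i) + 2) :
    Ppred n k (fun j => if j = k - 1 then 1 else s j) (Vset k s) (Uset k s) ∧
    Ppred n k (fun j => if j = k - 1 then 1 else s j) (Uset k s) (Vset k s) ∧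
    (∀ A B : Finset ℕ, Ppred n k (fun j => if j = k - 1 then 1 else s j) A B →
      Xor' (Vset k s ⊆ A ∧ Uset k s ⊆ B) (Uset k s ⊆ A ∧ Vset k s ⊆ B)) := by
  refine ⟨⟨Vset_subset hk hn, Uset_subset hk hn, (disjoint_UV hs).symm,
      ⟨Vset k s, subset_rfl, stable_Vset hk hs hn⟩,
      ⟨Uset k s, subset_rfl, stable_Uset hk hs hn⟩⟩,
    ⟨Uset_subset hk hn, Vset_subset hk hn, disjoint_UV hs,
      ⟨Uset k s, subset_rfl, stable_Uset hk hs hn⟩,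
      ⟨Vset k s, subset_rfl, stable_Vset hk hs hn⟩⟩, ?_⟩
  intro A B hP
  obtain ⟨hA, hB, hAB, ⟨C, hCA, hC⟩, ⟨D, hDB, hD⟩⟩ := hP
  have hdisj : Disjoint C D := Finset.disjoint_of_subset_left hCA
    (Finset.disjoint_of_subset_right hDB hAB)
  rcases pair_lemma hk hs hn hC hD hdisj with ⟨hCU, hDV⟩ | ⟨hCV, hDU⟩
  · -- U ⊆ A, V ⊆ B : right case of Xor
    right
    refine ⟨⟨hCU ▸ hCA, hDV ▸ hDB⟩, ?_⟩
    rintro ⟨hVA, hUB⟩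
    have h2A : (2 : ℕ) ∈ A := hVA (two_mem_Vset hk)
    have h2B : (2 : ℕ) ∈ B := (hDV ▸ hDB) (two_mem_Vset hk)
    exact Finset.disjoint_left.1 hAB h2A h2B
  · left
    refine ⟨⟨hCV ▸ hCA, hDU ▸ hDB⟩, ?_⟩
    rintro ⟨hUA, hVB⟩
    have h2A : (2 : ℕ) ∈ A := (hCV ▸ hCA) (two_mem_Vset hk)
    have h2B : (2 : ℕ) ∈ B := hVB (two_mem_Vset hk)
    exact Finset.disjoint_left.1 hAB h2A h2B
end
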